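/- arXiv:0807.2734 — 3 statements merged into one kernel-verified Lean document; each statement's English description precedes it below -/
import Mathlib

section
/- For all continuous functions v, w : [0,1] → ℝ, the Hellinger distance between the densities p_v and p_w satisfies h(p_v, p_w) ≤ ‖v − w‖_∞ · e^{‖v − w‖_∞ / 2}, i.e. (∫₀¹ (√(p_v(s)) − √(p_w(s)))² ds)^{1/2} ≤ ‖v − w‖_∞ · e^{‖v − w‖_∞ / 2}. -/
open MeasureTheory

private lemma sqrt_exp_half (x : ℝ) : Real.sqrt (Real.exp x) = Real.exp (x / 2) := by
  rw [show Real.exp x = (Real.exp (x / 2)) ^ 2 by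
        rw [sq, ← Real.exp_add]; ring_nf,
      Real.sqrt_sq (Real.exp_nonneg _)]

private lemma expand_sq (x y a b : ℝ) (ha : 0 < a) (hb : 0 < b) :
    (x / a - y / b) ^ 2 = x ^ 2 / a ^ 2 + y ^ 2 / b ^ 2 - 2 / (a * b) * (x * y) := by
  field_simp
  ring

private lemma exp_setInt_pos (f : ℝ → ℝ) (hf : ContinuousOn f (Set.Icc 0 1)) :
    0 < ∫ u in Set.Icc (0 : ℝ) 1, Real.exp (f u) := by
  obtain ⟨x0, hx0, hmin⟩ := isCompact_Icc.exists_isMinOn ⟨0, by norm_num⟩ hf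
  have h1 : ∫ _ in Set.Icc (0 : ℝ) 1, Real.exp (f x0) ≤ ∫ u in Set.Icc (0 : ℝ) 1, Real.exp (f u) :=
    setIntegral_mono_on (integrableOn_const measure_Icc_lt_top.ne)
      ((Real.continuous_exp.comp_continuousOn hf).integrableOn_Icc) measurableSet_Icc
      (fun s hs => Real.exp_le_exp.2 (isMinOn_iff.1 hmin s hs))
  have h2 : ∫ _ in Set.Icc (0 : ℝ) 1, Real.exp (f x0) = Real.exp (f x0) := by simp
  have := Real.exp_pos (f x0)
  linarith [h2 ▸ h1]

set_option maxHeartbeats 1000000 in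
/-- Hellinger distance bound: for continuous `v, w` on `[0,1]`, writing
`p_w(s) = e^{w(s)} / ∫₀¹ e^{w(u)} du`, one has
`h(p_v, p_w) ≤ ‖v - w‖_∞ e^{‖v - w‖_∞ / 2}`. -/
theorem hellinger_exp_density_bound
    (v w : ℝ → ℝ) (hv : ContinuousOn v (Set.Icc 0 1))
    (hw : ContinuousOn w (Set.Icc 0 1))
    (M : ℝ) (hM : M = sSup ((fun s => |v s - w s|) '' Set.Icc (0 : ℝ) 1)) :
    Real.sqrt (∫ s in Set.Icc (0 : ℝ) 1,
        (Real.sqrt (Real.exp (v s) / ∫ u in Set.Icc (0 : ℝ) 1, Real.exp (v u)) -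
          Real.sqrt (Real.exp (w s) / ∫ u in Set.Icc (0 : ℝ) 1, Real.exp (w u))) ^ 2)
      ≤ M * Real.exp (M / 2) := by
  have hvw : ContinuousOn (fun s => (v s + w s) / 2) (Set.Icc 0 1) := (hv.add hw).div_const 2
  have Iv : IntegrableOn (fun s => Real.exp (v s)) (Set.Icc (0:ℝ) 1) :=
    (Real.continuous_exp.comp_continuousOn hv).integrableOn_Icc
  have Iw : IntegrableOn (fun s => Real.exp (w s)) (Set.Icc (0:ℝ) 1) :=
    (Real.continuous_exp.comp_continuousOn hw).integrableOn_Icc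
  have Ivw : IntegrableOn (fun s => Real.exp ((v s + w s) / 2)) (Set.Icc (0:ℝ) 1) :=
    (Real.continuous_exp.comp_continuousOn hvw).integrableOn_Icc
  obtain ⟨A, hA⟩ : ∃ x, x = ∫ u in Set.Icc (0:ℝ) 1, Real.exp (v u) := ⟨_, rfl⟩
  obtain ⟨B, hB⟩ : ∃ x, x = ∫ u in Set.Icc (0:ℝ) 1, Real.exp (w u) := ⟨_, rfl⟩
  obtain ⟨C, hC⟩ : ∃ x, x = ∫ u in Set.Icc (0:ℝ) 1, Real.exp ((v u + w u) / 2) := ⟨_, rfl⟩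
  rw [← hA, ← hB]
  have hApos : 0 < A := by rw [hA]; exact exp_setInt_pos v hv
  have hBpos : 0 < B := by rw [hB]; exact exp_setInt_pos w hw
  have hCpos : 0 < C := by rw [hC]; exact exp_setInt_pos _ hvw
  have hsA : 0 < Real.sqrt A := Real.sqrt_pos.2 hApos
  have hsB : 0 < Real.sqrt B := Real.sqrt_pos.2 hBpos
  -- M bounds
  have hbdd : BddAbove ((fun s => |v s - w s|) '' Set.Icc (0:ℝ) 1) :=
    (isCompact_Icc.image_of_continuousOn ((hv.sub hw).abs)).bddAbove
  have hMb : ∀ s ∈ Set.Icc (0:ℝ) 1, |v s - w s| ≤ M := fun s hs =>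
    hM ▸ le_csSup hbdd ⟨s, hs, rfl⟩
  have hM0 : 0 ≤ M :=
    le_trans (abs_nonneg (v 0 - w 0)) (hMb 0 (by norm_num))
  -- the key comparison constant
  obtain ⟨c, hc⟩ : ∃ x, x = (Real.exp (M / 2) + Real.exp (-(M / 2))) / 2 := ⟨_, rfl⟩
  have hprod : Real.exp (M / 2) * Real.exp (-(M / 2)) = 1 := by
    rw [← Real.exp_add]; simp
  have hc1 : 1 ≤ c := by
    rw [hc]
    nlinarith [sq_nonneg (Real.exp (M / 2) - Real.exp (-(M / 2))), Real.exp_pos (M / 2),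
      Real.exp_pos (-(M / 2))]
  have hcm : 2 * (c - 1) ≤ (M / 2) ^ 2 * Real.exp (M / 2) := by
    have hq : Real.exp (M / 4) * Real.exp (-(M / 4)) = 1 := by rw [← Real.exp_add]; simp
    have hq2 : Real.exp (M / 4) ^ 2 = Real.exp (M / 2) := by
      rw [sq, ← Real.exp_add]; ring_nf
    have hr2 : Real.exp (-(M / 4)) ^ 2 = Real.exp (-(M / 2)) := by
      rw [sq, ← Real.exp_add]; ring_nf
    have hr2lb : 1 - M / 2 ≤ Real.exp (-(M / 2)) := by
      linarith [Real.add_one_le_exp (-(M / 2))]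
    have hqr : Real.exp (-(M / 4)) ≤ Real.exp (M / 4) :=
      Real.exp_le_exp.2 (by linarith)
    have hdiff : Real.exp (M / 4) - Real.exp (-(M / 4)) ≤ (M / 2) * Real.exp (M / 4) := by
      nlinarith [hr2lb, hq, hr2, Real.exp_pos (-(M / 4)), Real.exp_pos (M / 4)]
    have hceq : 2 * (c - 1) = (Real.exp (M / 4) - Real.exp (-(M / 4))) ^ 2 := by
      rw [hc]; nlinarith [hq, hq2, hr2]
    rw [hceq, ← hq2]
    nlinarith [hdiff, sub_nonneg.2 hqr, Real.exp_pos (M / 4), hM0]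
  -- the Hellinger-square identity
  have I1 : IntegrableOn (fun s => Real.exp (v s) / A) (Set.Icc (0:ℝ) 1) := Iv.div_const A
  have I2 : IntegrableOn (fun s => Real.exp (w s) / B) (Set.Icc (0:ℝ) 1) := Iw.div_const B
  have I12 : IntegrableOn (fun s => Real.exp (v s) / A + Real.exp (w s) / B)
      (Set.Icc (0:ℝ) 1) := I1.add I2
  have I3 : IntegrableOn
      (fun s => 2 / (Real.sqrt A * Real.sqrt B) * Real.exp ((v s + w s) / 2))
      (Set.Icc (0:ℝ) 1) := Ivw.const_mul _
  have hInt : (∫ s in Set.Icc (0:ℝ) 1,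
      (Real.sqrt (Real.exp (v s) / A) - Real.sqrt (Real.exp (w s) / B)) ^ 2)
      = 2 - 2 / (Real.sqrt A * Real.sqrt B) * C := by
    have step1 : (∫ s in Set.Icc (0:ℝ) 1,
        (Real.sqrt (Real.exp (v s) / A) - Real.sqrt (Real.exp (w s) / B)) ^ 2)
        = ∫ s in Set.Icc (0:ℝ) 1,
          (Real.exp (v s) / A + Real.exp (w s) / B
            - 2 / (Real.sqrt A * Real.sqrt B) * Real.exp ((v s + w s) / 2)) := by
      refine setIntegral_congr_fun measurableSet_Icc (fun s _ => ?_)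
      have e1 : (Real.exp (v s / 2)) ^ 2 = Real.exp (v s) := by
        rw [sq, ← Real.exp_add]; ring_nf
      have e2 : (Real.exp (w s / 2)) ^ 2 = Real.exp (w s) := by
        rw [sq, ← Real.exp_add]; ring_nf
      have e3 : Real.exp (v s / 2) * Real.exp (w s / 2) = Real.exp ((v s + w s) / 2) := by
        rw [← Real.exp_add]; ring_nf
      rw [Real.sqrt_div (Real.exp_nonneg _), Real.sqrt_div (Real.exp_nonneg _),
        sqrt_exp_half, sqrt_exp_half, expand_sq _ _ _ _ hsA hsB,
        Real.sq_sqrt hApos.le, Real.sq_sqrt hBpos.le, e1, e2, e3]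
    rw [step1, integral_sub I12 I3, integral_add I1 I2,
      integral_div, integral_div, integral_const_mul, ← hA, ← hB, ← hC,
      div_self hApos.ne', div_self hBpos.ne']
    ring
  -- pointwise bound
  have hpt : ∀ s ∈ Set.Icc (0:ℝ) 1,
      Real.exp (v s) + Real.exp (w s) ≤ 2 * c * Real.exp ((v s + w s) / 2) := by
    intro s hs
    have habs := abs_le.1 (hMb s hs)
    have h1 : Real.exp (v s) = Real.exp ((v s + w s) / 2) * Real.exp ((v s - w s) / 2) := by
      rw [← Real.exp_add]; congr 1; ring
    have h2 : Real.exp (w s) = Real.exp ((v s + w s) / 2) * Real.exp (-((v s - w s) / 2)) := by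
      rw [← Real.exp_add]; congr 1; ring
    have e1 : Real.exp ((v s - w s) / 2) ≤ Real.exp (M / 2) :=
      Real.exp_le_exp.2 (by linarith [habs.2])
    have e2 : Real.exp ((v s - w s) / 2) * Real.exp (-((v s - w s) / 2)) = 1 := by
      rw [← Real.exp_add]; simp
    have e5 : Real.exp (-((v s - w s) / 2)) * Real.exp (-(M / 2)) ≤ 1 := by
      rw [← Real.exp_add]
      exact Real.exp_le_one_iff.2 (by linarith [habs.1])
    have key : Real.exp ((v s - w s) / 2) + Real.exp (-((v s - w s) / 2))
        ≤ Real.exp (M / 2) + Real.exp (-(M / 2)) := by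
      nlinarith [mul_nonneg (sub_nonneg.2 e1) (sub_nonneg.2 e5),
        Real.exp_pos ((v s - w s) / 2), Real.exp_pos (-((v s - w s) / 2)),
        Real.exp_pos (M / 2), Real.exp_pos (-(M / 2))]
    have key2 : Real.exp ((v s - w s) / 2) + Real.exp (-((v s - w s) / 2)) ≤ 2 * c := by
      rw [hc]; linarith [key]
    have hepos : (0:ℝ) ≤ Real.exp ((v s + w s) / 2) := (Real.exp_pos _).le
    rw [h1, h2]
    calc Real.exp ((v s + w s) / 2) * Real.exp ((v s - w s) / 2)
          + Real.exp ((v s + w s) / 2) * Real.exp (-((v s - w s) / 2))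
        = Real.exp ((v s + w s) / 2)
            * (Real.exp ((v s - w s) / 2) + Real.exp (-((v s - w s) / 2))) := by ring
      _ ≤ Real.exp ((v s + w s) / 2) * (2 * c) := mul_le_mul_of_nonneg_left key2 hepos
      _ = 2 * c * Real.exp ((v s + w s) / 2) := by ring
  -- integral comparison
  have Isum : IntegrableOn (fun s => Real.exp (v s) + Real.exp (w s)) (Set.Icc (0:ℝ) 1) :=
    Iv.add Iw
  have hAB : A + B ≤ 2 * c * C := by
    have hmono := setIntegral_mono_on Isum (Ivw.const_mul (2 * c))
      measurableSet_Icc hpt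
    rwa [integral_add Iv Iw, integral_const_mul, ← hA, ← hB, ← hC] at hmono
  -- √A √B ≤ c C
  have hsq : Real.sqrt A * Real.sqrt B ≤ c * C := by
    have hABle : A * B ≤ (c * C) ^ 2 := by nlinarith [sq_nonneg (A - B)]
    calc Real.sqrt A * Real.sqrt B = Real.sqrt (A * B) := (Real.sqrt_mul hApos.le B).symm
      _ ≤ Real.sqrt ((c * C) ^ 2) := Real.sqrt_le_sqrt hABle
      _ = c * C := Real.sqrt_sq (by positivity)
  -- fraction bound
  have hfrac : 1 / c ≤ C / (Real.sqrt A * Real.sqrt B) := by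
    rw [div_le_div_iff₀ (by linarith) (by positivity)]
    nlinarith [hsq]
  -- final numeric bound
  have hfinal : 2 - 2 / (Real.sqrt A * Real.sqrt B) * C ≤ M ^ 2 * Real.exp M := by
    have hcpos : (0:ℝ) < c := by linarith
    have h2c : 2 - 2 / c ≤ 2 * (c - 1) := by
      have hcc : 2 / c * c = 2 := div_mul_cancel₀ 2 hcpos.ne'
      nlinarith [sq_nonneg (c - 1), hcpos, hcc]
    have hee : Real.exp (M / 2) ≤ Real.exp M := Real.exp_le_exp.2 (by linarith)
    have hfc : 2 / c ≤ 2 * (C / (Real.sqrt A * Real.sqrt B)) := by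
      rw [show (2:ℝ) / c = 2 * (1 / c) by ring]
      linarith [hfrac]
    have hlast : 2 - 2 / c ≤ M ^ 2 * Real.exp M := by
      nlinarith [Real.exp_pos (M / 2), hM0, h2c, hcm, hee, sq_nonneg M]
    have hEq : 2 / (Real.sqrt A * Real.sqrt B) * C
        = 2 * (C / (Real.sqrt A * Real.sqrt B)) := by ring
    rw [hEq]
    linarith [hfc]
  rw [hInt]
  calc Real.sqrt (2 - 2 / (Real.sqrt A * Real.sqrt B) * C)
      ≤ Real.sqrt (M ^ 2 * Real.exp M) := Real.sqrt_le_sqrt hfinal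
    _ = M * Real.exp (M / 2) := by
        rw [Real.sqrt_mul (sq_nonneg M), Real.sqrt_sq hM0, sqrt_exp_half]
end

section
/- There exists a universal constant C > 0 such that for all continuous functions v, w : [0,1] → ℝ, both the Kullback–Leibler divergence K(p_v, p_w) = ∫₀¹ p_v(s) log(p_v(s)/p_w(s)) ds and the second moment V(p_v, p_w) = ∫₀¹ p_v(s) (log(p_v(s)/p_w(s)))² ds satisfy max(K(p_v, p_w), V(p_v, p_w)) ≤ C ‖v − w‖_∞² · e^{‖v − w‖_∞ / 2} · (1 + ‖v − w‖_∞)². -/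
open MeasureTheory

private lemma aux_g_bound (t : ℝ) : t - 1 + Real.exp (-t) ≤ t ^ 2 * Real.exp |t| := by
  rcases le_or_gt 0 t with ht | ht
  · rw [abs_of_nonneg ht]
    have h1 : (0:ℝ) < 1 + t := by linarith
    have h2 : 1 + t ≤ Real.exp t := by linarith [Real.add_one_le_exp t]
    have h3 : Real.exp (-t) ≤ 1 / (1 + t) := by
      rw [Real.exp_neg, inv_eq_one_div]
      apply one_div_le_one_div_of_le h1 h2
    have h4 : 1 ≤ Real.exp t := Real.one_le_exp ht
    have key : t - 1 + 1 / (1 + t) ≤ t ^ 2 := by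
      have : (t - 1 + 1 / (1 + t)) * (1 + t) ≤ t ^ 2 * (1 + t) := by
        field_simp
        nlinarith [mul_nonneg (mul_nonneg ht ht) ht]
      exact le_of_mul_le_mul_right this h1
    nlinarith [sq_nonneg t]
  · rw [abs_of_neg ht]
    set E := Real.exp (-t) with hE
    have hEpos : 0 < E := Real.exp_pos _
    have h2 : (1 + t) ≤ Real.exp t := by linarith [Real.add_one_le_exp t]
    have h2' : E * (1 + t) ≤ 1 := by
      calc E * (1 + t) ≤ E * Real.exp t := by nlinarith
      _ = 1 := by rw [hE, ← Real.exp_add]; simp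
    have h3 : E - 1 ≤ -t * E := by nlinarith
    have h4 : -t * (E - 1) ≤ -t * (-t * E) := by
      apply mul_le_mul_of_nonneg_left h3 (by linarith)
    nlinarith

/-- Kullback-Leibler type bound (Lemma 3.1 in van der Vaart–van Zanten): there is a
universal constant `C > 0` such that for all continuous `v, w` on `[0,1]`, writing
`p_w(s) = e^{w(s)} / ∫₀¹ e^{w(u)} du` and `M = ‖v - w‖_∞`,
`max(K(p_v,p_w), V(p_v,p_w)) ≤ C M² e^{M/2} (1 + M)²`. -/
theorem kl_exp_density_bound :
    ∃ C > (0 : ℝ), ∀ v w : ℝ → ℝ, ContinuousOn v (Set.Icc 0 1) →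
      ContinuousOn w (Set.Icc 0 1) →
      ∀ M : ℝ, M = sSup ((fun s => |v s - w s|) '' Set.Icc (0 : ℝ) 1) →
      max
        (∫ s in Set.Icc (0 : ℝ) 1,
          (Real.exp (v s) / ∫ u in Set.Icc (0 : ℝ) 1, Real.exp (v u)) *
            Real.log ((Real.exp (v s) / ∫ u in Set.Icc (0 : ℝ) 1, Real.exp (v u)) /
              (Real.exp (w s) / ∫ u in Set.Icc (0 : ℝ) 1, Real.exp (w u))))
        (∫ s in Set.Icc (0 : ℝ) 1,
          (Real.exp (v s) / ∫ u in Set.Icc (0 : ℝ) 1, Real.exp (v u)) *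
            (Real.log ((Real.exp (v s) / ∫ u in Set.Icc (0 : ℝ) 1, Real.exp (v u)) /
              (Real.exp (w s) / ∫ u in Set.Icc (0 : ℝ) 1, Real.exp (w u)))) ^ 2)
      ≤ C * M ^ 2 * Real.exp (M / 2) * (1 + M) ^ 2 := by
  refine ⟨32, by norm_num, ?_⟩
  intro v w hv hw M hM
  have hvc : ContinuousOn (fun u => Real.exp (v u)) (Set.Icc 0 1) :=
    Real.continuous_exp.comp_continuousOn hv
  have hwc : ContinuousOn (fun u => Real.exp (w u)) (Set.Icc 0 1) :=
    Real.continuous_exp.comp_continuousOn hw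
  have hvInt : IntegrableOn (fun u => Real.exp (v u)) (Set.Icc (0:ℝ) 1) := hvc.integrableOn_Icc
  have hwInt : IntegrableOn (fun u => Real.exp (w u)) (Set.Icc (0:ℝ) 1) := hwc.integrableOn_Icc
  set A := ∫ u in Set.Icc (0:ℝ) 1, Real.exp (v u) with hAdef
  set B := ∫ u in Set.Icc (0:ℝ) 1, Real.exp (w u) with hBdef
  have hIccVol : volume (Set.Icc (0:ℝ) 1) = 1 := by
    rw [Real.volume_Icc]; norm_num
  have hA : 0 < A := by
    rw [hAdef]
    rw [setIntegral_pos_iff_support_of_nonneg_ae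
      (Filter.Eventually.of_forall fun x => (Real.exp_pos _).le) hvInt]
    have : Function.support (fun u => Real.exp (v u)) = Set.univ := by
      ext x; simp [Function.support, Real.exp_ne_zero]
    rw [this, Set.univ_inter, hIccVol]
    norm_num
  have hB : 0 < B := by
    rw [hBdef]
    rw [setIntegral_pos_iff_support_of_nonneg_ae
      (Filter.Eventually.of_forall fun x => (Real.exp_pos _).le) hwInt]
    have : Function.support (fun u => Real.exp (w u)) = Set.univ := by
      ext x; simp [Function.support, Real.exp_ne_zero]
    rw [this, Set.univ_inter, hIccVol]
    norm_num
  -- bounds on |v - w|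
  have hbdd : BddAbove ((fun s => |v s - w s|) '' Set.Icc (0:ℝ) 1) :=
    (isCompact_Icc.image_of_continuousOn (hv.sub hw).abs).bddAbove
  have habs : ∀ s ∈ Set.Icc (0:ℝ) 1, |v s - w s| ≤ M := fun s hs =>
    hM ▸ le_csSup hbdd ⟨s, hs, rfl⟩
  have hM0 : 0 ≤ M :=
    le_trans (abs_nonneg _) (habs 0 (by norm_num))
  -- bound on |log B - log A|
  have hlogBA : |Real.log B - Real.log A| ≤ M := by
    have hBA : B ≤ Real.exp M * A := by
      rw [hAdef, ← MeasureTheory.integral_const_mul]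
      apply setIntegral_mono_on hwInt (hvInt.const_mul _) measurableSet_Icc
      intro s hs
      rw [← Real.exp_add]
      apply Real.exp_le_exp.2
      have := habs s hs
      rw [abs_le] at this
      linarith [this.1]
    have hAB : A ≤ Real.exp M * B := by
      rw [hBdef, ← MeasureTheory.integral_const_mul]
      apply setIntegral_mono_on hvInt (hwInt.const_mul _) measurableSet_Icc
      intro s hs
      rw [← Real.exp_add]
      apply Real.exp_le_exp.2
      have := habs s hs
      rw [abs_le] at this
      linarith [this.2]
    have h1 : Real.log B ≤ M + Real.log A := by
      calc Real.log B ≤ Real.log (Real.exp M * A) := Real.log_le_log hB hBA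
      _ = M + Real.log A := by rw [Real.log_mul (Real.exp_ne_zero _) hA.ne', Real.log_exp]
    have h2 : Real.log A ≤ M + Real.log B := by
      calc Real.log A ≤ Real.log (Real.exp M * B) := Real.log_le_log hA hAB
      _ = M + Real.log B := by rw [Real.log_mul (Real.exp_ne_zero _) hB.ne', Real.log_exp]
    rw [abs_le]; constructor <;> linarith
  set c := Real.log B - Real.log A with hc
  -- rewrite the log
  have hlog : ∀ s : ℝ, Real.log ((Real.exp (v s) / A) / (Real.exp (w s) / B))
      = v s - w s + c := by
    intro s
    rw [Real.log_div (div_pos (Real.exp_pos _) hA).ne' (div_pos (Real.exp_pos _) hB).ne',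
      Real.log_div (Real.exp_ne_zero _) hA.ne', Real.log_div (Real.exp_ne_zero _) hB.ne',
      Real.log_exp, Real.log_exp, hc]
    ring
  -- bound on the "r" function
  have hr : ∀ s ∈ Set.Icc (0:ℝ) 1, |v s - w s + c| ≤ 2 * M := by
    intro s hs
    calc |v s - w s + c| ≤ |v s - w s| + |c| := abs_add_le _ _
    _ ≤ M + M := add_le_add (habs s hs) hlogBA
    _ = 2 * M := by ring
  -- integrability facts
  have hrc : ContinuousOn (fun s => v s - w s + c) (Set.Icc (0:ℝ) 1) :=
    (hv.sub hw).add continuousOn_const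
  have hpc : ContinuousOn (fun s => Real.exp (v s) / A) (Set.Icc (0:ℝ) 1) :=
    hvc.div_const A
  have int4 : IntegrableOn (fun s => Real.exp (v s) / A) (Set.Icc (0:ℝ) 1) :=
    hpc.integrableOn_Icc
  have int1 : IntegrableOn (fun s => Real.exp (v s) / A * (v s - w s + c)) (Set.Icc (0:ℝ) 1) :=
    (hpc.mul hrc).integrableOn_Icc
  have int2 : IntegrableOn (fun s => Real.exp (v s) / A * (v s - w s + c) ^ 2)
      (Set.Icc (0:ℝ) 1) := (hpc.mul (hrc.pow 2)).integrableOn_Icc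
  have int3 : IntegrableOn (fun s => Real.exp (v s) / A * Real.exp (-(v s - w s + c)))
      (Set.Icc (0:ℝ) 1) :=
    (hpc.mul (Real.continuous_exp.comp_continuousOn hrc.neg)).integrableOn_Icc
  have int5 : IntegrableOn
      (fun s => Real.exp (v s) / A * ((v s - w s + c) - 1 + Real.exp (-(v s - w s + c))))
      (Set.Icc (0:ℝ) 1) :=
    (hpc.mul ((hrc.sub continuousOn_const).add
      (Real.continuous_exp.comp_continuousOn hrc.neg))).integrableOn_Icc
  -- normalization integrals
  have Ip : ∫ s in Set.Icc (0:ℝ) 1, Real.exp (v s) / A = 1 := by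
    rw [MeasureTheory.integral_div, ← hAdef, div_self hA.ne']
  have Iw : ∫ s in Set.Icc (0:ℝ) 1, Real.exp (w s) / B = 1 := by
    rw [MeasureTheory.integral_div, ← hBdef, div_self hB.ne']
  have hpw : ∀ s : ℝ, Real.exp (v s) / A * Real.exp (-(v s - w s + c))
      = Real.exp (w s) / B := by
    intro s
    have h : -(v s - w s + c) = w s - v s + (Real.log A - Real.log B) := by rw [hc]; ring
    rw [h, Real.exp_add, Real.exp_sub, Real.exp_sub, Real.exp_log hA, Real.exp_log hB]
    field_simp
  have Ipw : ∫ s in Set.Icc (0:ℝ) 1,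
      Real.exp (v s) / A * Real.exp (-(v s - w s + c)) = 1 := by
    simp only [hpw]; exact Iw
  -- K split identity
  have hKsplit : (∫ s in Set.Icc (0:ℝ) 1,
          Real.exp (v s) / A * ((v s - w s + c) - 1 + Real.exp (-(v s - w s + c))))
      = (∫ s in Set.Icc (0:ℝ) 1, Real.exp (v s) / A * (v s - w s + c))
        - (∫ s in Set.Icc (0:ℝ) 1, Real.exp (v s) / A)
        + (∫ s in Set.Icc (0:ℝ) 1, Real.exp (v s) / A * Real.exp (-(v s - w s + c))) := by
    rw [show (fun s => Real.exp (v s) / A * ((v s - w s + c) - 1 + Real.exp (-(v s - w s + c))))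
        = fun s => (Real.exp (v s) / A * (v s - w s + c) - Real.exp (v s) / A)
            + Real.exp (v s) / A * Real.exp (-(v s - w s + c)) from
      funext fun s => by ring]
    have int6 : IntegrableOn
        (fun s => Real.exp (v s) / A * (v s - w s + c) - Real.exp (v s) / A)
        (Set.Icc (0:ℝ) 1) := by exact int1.sub int4
    rw [MeasureTheory.integral_add int6 int3, MeasureTheory.integral_sub int1 int4]
  -- bound on the g-term
  have hKg : (∫ s in Set.Icc (0:ℝ) 1,
      Real.exp (v s) / A * ((v s - w s + c) - 1 + Real.exp (-(v s - w s + c))))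
      ≤ 4 * M ^ 2 * Real.exp (2 * M) := by
    have step : (∫ s in Set.Icc (0:ℝ) 1,
        Real.exp (v s) / A * ((v s - w s + c) - 1 + Real.exp (-(v s - w s + c))))
        ≤ ∫ s in Set.Icc (0:ℝ) 1, Real.exp (v s) / A * (4 * M ^ 2 * Real.exp (2 * M)) := by
      apply setIntegral_mono_on int5 (int4.mul_const _) measurableSet_Icc
      intro s hs
      have h1 : 0 ≤ Real.exp (v s) / A := by positivity
      have h2 := aux_g_bound (v s - w s + c)
      have hrb := hr s hs
      have hsq : (v s - w s + c) ^ 2 ≤ (2 * M) ^ 2 := by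
        have := abs_nonneg (v s - w s + c)
        nlinarith [sq_abs (v s - w s + c)]
      have hE : Real.exp |v s - w s + c| ≤ Real.exp (2 * M) := Real.exp_le_exp.2 hrb
      have h3 : (v s - w s + c) ^ 2 * Real.exp |v s - w s + c|
          ≤ (2 * M) ^ 2 * Real.exp (2 * M) :=
        mul_le_mul hsq hE (Real.exp_pos _).le (by positivity)
      apply mul_le_mul_of_nonneg_left _ h1
      calc (v s - w s + c) - 1 + Real.exp (-(v s - w s + c))
          ≤ (v s - w s + c) ^ 2 * Real.exp |v s - w s + c| := h2
      _ ≤ (2 * M) ^ 2 * Real.exp (2 * M) := h3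
      _ = 4 * M ^ 2 * Real.exp (2 * M) := by ring
    calc (∫ s in Set.Icc (0:ℝ) 1,
        Real.exp (v s) / A * ((v s - w s + c) - 1 + Real.exp (-(v s - w s + c)))) ≤ _ := step
    _ = 4 * M ^ 2 * Real.exp (2 * M) := by
      rw [MeasureTheory.integral_mul_const, Ip, one_mul]
  -- K bounds
  have hK1 : (∫ s in Set.Icc (0:ℝ) 1, Real.exp (v s) / A * (v s - w s + c))
      ≤ 4 * M ^ 2 * Real.exp (2 * M) := by
    rw [hKsplit, Ip, Ipw] at hKg; linarith
  have hK2 : (∫ s in Set.Icc (0:ℝ) 1, Real.exp (v s) / A * (v s - w s + c)) ≤ 2 * M := by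
    have step : (∫ s in Set.Icc (0:ℝ) 1, Real.exp (v s) / A * (v s - w s + c))
        ≤ ∫ s in Set.Icc (0:ℝ) 1, Real.exp (v s) / A * (2 * M) := by
      apply setIntegral_mono_on int1 (int4.mul_const _) measurableSet_Icc
      intro s hs
      have h1 : 0 ≤ Real.exp (v s) / A := by positivity
      apply mul_le_mul_of_nonneg_left _ h1
      exact le_trans (le_abs_self _) (hr s hs)
    calc (∫ s in Set.Icc (0:ℝ) 1, Real.exp (v s) / A * (v s - w s + c)) ≤ _ := step
    _ = 2 * M := by rw [MeasureTheory.integral_mul_const, Ip, one_mul]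
  -- V bound
  have hV : (∫ s in Set.Icc (0:ℝ) 1, Real.exp (v s) / A * (v s - w s + c) ^ 2)
      ≤ 4 * M ^ 2 := by
    have step : (∫ s in Set.Icc (0:ℝ) 1, Real.exp (v s) / A * (v s - w s + c) ^ 2)
        ≤ ∫ s in Set.Icc (0:ℝ) 1, Real.exp (v s) / A * (4 * M ^ 2) := by
      apply setIntegral_mono_on int2 (int4.mul_const _) measurableSet_Icc
      intro s hs
      have h1 : 0 ≤ Real.exp (v s) / A := by positivity
      apply mul_le_mul_of_nonneg_left _ h1
      have hrb := hr s hs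
      nlinarith [sq_abs (v s - w s + c), abs_nonneg (v s - w s + c)]
    calc (∫ s in Set.Icc (0:ℝ) 1, Real.exp (v s) / A * (v s - w s + c) ^ 2) ≤ _ := step
    _ = 4 * M ^ 2 := by rw [MeasureTheory.integral_mul_const, Ip, one_mul]
  -- final assembly
  simp only [hlog]
  have hexpM2 : 1 ≤ Real.exp (M / 2) := Real.one_le_exp (by linarith)
  have hone : 1 ≤ (1 + M) ^ 2 := by nlinarith
  rw [max_le_iff]
  constructor
  · rcases le_or_gt M 1 with hM1 | hM1
    · have hexp : Real.exp (2 * M) ≤ 8 := by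
        calc Real.exp (2 * M) ≤ Real.exp 2 := Real.exp_le_exp.2 (by linarith)
        _ = Real.exp 1 * Real.exp 1 := by rw [← Real.exp_add]; norm_num
        _ ≤ 2.7182818286 * 2.7182818286 := by
            have := Real.exp_one_lt_d9.le
            exact mul_le_mul this this (Real.exp_pos _).le (by norm_num)
        _ ≤ 8 := by norm_num
      calc (∫ s in Set.Icc (0:ℝ) 1, Real.exp (v s) / A * (v s - w s + c))
          ≤ 4 * M ^ 2 * Real.exp (2 * M) := hK1
      _ ≤ 4 * M ^ 2 * 8 := mul_le_mul_of_nonneg_left hexp (by positivity)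
      _ = 32 * M ^ 2 := by ring
      _ ≤ 32 * M ^ 2 * Real.exp (M / 2) := le_mul_of_one_le_right (by positivity) hexpM2
      _ ≤ 32 * M ^ 2 * Real.exp (M / 2) * (1 + M) ^ 2 :=
          le_mul_of_one_le_right (by positivity) hone
    · calc (∫ s in Set.Icc (0:ℝ) 1, Real.exp (v s) / A * (v s - w s + c)) ≤ 2 * M := hK2
      _ ≤ 32 * M ^ 2 := by nlinarith
      _ ≤ 32 * M ^ 2 * Real.exp (M / 2) := le_mul_of_one_le_right (by positivity) hexpM2
      _ ≤ 32 * M ^ 2 * Real.exp (M / 2) * (1 + M) ^ 2 :=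
          le_mul_of_one_le_right (by positivity) hone
  · calc (∫ s in Set.Icc (0:ℝ) 1, Real.exp (v s) / A * (v s - w s + c) ^ 2)
        ≤ 4 * M ^ 2 := hV
    _ ≤ 32 * M ^ 2 := by nlinarith
    _ ≤ 32 * M ^ 2 * Real.exp (M / 2) := le_mul_of_one_le_right (by positivity) hexpM2
    _ ≤ 32 * M ^ 2 * Real.exp (M / 2) * (1 + M) ^ 2 :=
        le_mul_of_one_le_right (by positivity) hone
end

section
/- Let δ ∈ (0,1) and let f : ℝ → ℝ be bounded and Hölder of order δ. Then there exists a constant C > 0 (depending only on f and δ) such that for every integrable function g : ℝ → ℝ with compact support satisfying ∫ g(u) du = 0 and every t ∈ [0,1]: |I^{1−δ}(f ∗ g)(t)| ≤ C ∫ |u| (1 + log(1 + t/|u|)) |g(u)| du, where (f ∗ g)(s) = ∫ f(s − u) g(u) du. -/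
set_option maxHeartbeats 1000000

open MeasureTheory

/-- The (unnormalized) fractional integral of order `γ`:
`I^γ h (t) = ∫₀ᵗ (t - s)^(γ-1) h(s) ds` for `t > 0` and `0` for `t ≤ 0`. -/
noncomputable def fracInt (γ : ℝ) (h : ℝ → ℝ) (t : ℝ) : ℝ :=
  if 0 < t then ∫ s in (0 : ℝ)..t, (t - s) ^ (γ - 1) * h s else 0

/-- Convolution `(f ∗ g)(s) = ∫ f(s - u) g(u) du`. -/
noncomputable def conv (f g : ℝ → ℝ) (s : ℝ) : ℝ := ∫ u, f (s - u) * g u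

section Aux
open intervalIntegral Real

lemma rpow_diff_le (a b p : ℝ) (ha : 0 < a) (hab : a ≤ b) (hp : 0 ≤ p) :
    a ^ (-p) - b ^ (-p) ≤ p * (b - a) * a ^ (-p - 1) := by
  have hb : 0 < b := lt_of_lt_of_le ha hab
  have h1 : b ^ (-p) = a ^ (-p) * (a / b) ^ p := by
    rw [div_rpow ha.le hb.le, rpow_neg ha.le, rpow_neg hb.le]; field_simp
  have h2 : (1 : ℝ) - (a / b) ^ p ≤ p * ((b - a) / a) := by
    have hab' : 0 < a / b := by positivity
    have h3 : 1 + p * log (a / b) ≤ (a / b) ^ p := by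
      rw [rpow_def_of_pos hab']
      calc 1 + p * log (a/b) = (log (a/b) * p) + 1 := by ring
        _ ≤ _ := Real.add_one_le_exp _
    have hlog : -log (a / b) ≤ (b - a) / a := by
      rw [← log_inv, inv_div]
      calc log (b/a) ≤ b/a - 1 := Real.log_le_sub_one_of_pos (by positivity)
        _ = (b - a)/a := by field_simp
    nlinarith [hp, h3]
  calc a ^ (-p) - b ^ (-p) = a ^ (-p) * (1 - (a/b)^p) := by rw [h1]; ring
    _ ≤ a ^ (-p) * (p * ((b-a)/a)) := by
        apply mul_le_mul_of_nonneg_left h2 (rpow_nonneg ha.le _)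
    _ = p * (b - a) * (a ^ (-p) * a⁻¹) := by field_simp
    _ = p * (b - a) * a ^ (-p - 1) := by
        rw [← rpow_neg_one a, ← rpow_add ha]; ring_nf

lemma holder_continuous {f : ℝ → ℝ} {H δ : ℝ} (hδ : δ ∈ Set.Ioo (0:ℝ) 1)
    (hH : ∀ x y, |f x - f y| ≤ H * |x - y| ^ δ) : Continuous f := by
  have hH0 : 0 ≤ H := by
    have := hH 0 1
    simp at this
    calc (0:ℝ) ≤ |f 0 - f 1| := abs_nonneg _
      _ ≤ H := this
  rw [Metric.continuous_iff]
  intro b ε hε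
  refine ⟨(ε/(H+1))^(1/δ), by positivity, fun a hab => ?_⟩
  have h1 : |a - b| ^ δ < ε / (H + 1) := by
    have h2 : |a - b| ^ δ < ((ε/(H+1))^(1/δ)) ^ δ := by
      apply Real.rpow_lt_rpow (abs_nonneg _) _ hδ.1
      simpa [Real.dist_eq] using hab
    rwa [← Real.rpow_mul (by positivity), one_div,
      inv_mul_cancel₀ (ne_of_gt hδ.1), Real.rpow_one] at h2
  have h3 : dist (f a) (f b) ≤ H * |a - b| ^ δ := by
    rw [Real.dist_eq]; exact hH a b
  have h4 : 0 ≤ |a - b| ^ δ := Real.rpow_nonneg (abs_nonneg _) _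
  have h5 : H * |a - b| ^ δ ≤ H * (ε/(H+1)) := mul_le_mul_of_nonneg_left h1.le hH0
  have h6 : H * (ε/(H+1)) < ε := by
    rw [mul_comm, div_mul_eq_mul_div, div_lt_iff₀ (by positivity)]
    nlinarith
  linarith

lemma intg {δ : ℝ} (hδ1 : δ < 1) {e : ℝ → ℝ} (he : Continuous e) (c a b : ℝ) :
    IntervalIntegrable (fun q => (q - c) ^ (-δ) * e q) volume a b := by
  have := ((intervalIntegrable_rpow' (r := -δ) (by linarith) (a := a - c) (b := b - c)).comp_sub_right c).mul_continuousOn he.continuousOn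
  simpa using this

lemma intg0 {δ : ℝ} (hδ1 : δ < 1) {e : ℝ → ℝ} (he : Continuous e) (a b : ℝ) :
    IntervalIntegrable (fun q => q ^ (-δ) * e q) volume a b := by
  simpa using intg hδ1 he 0 a b

lemma intval {δ : ℝ} (hδ1 : δ < 1) (c a b : ℝ) :
    ∫ q in a..b, (q - c) ^ (-δ) = ((b-c) ^ (1-δ) - (a-c) ^ (1-δ)) / (1-δ) := by
  rw [intervalIntegral.integral_comp_sub_right (fun q => q ^ (-δ)) c,
    integral_rpow (Or.inl (by linarith))]
  ring_nf

lemma kernel_pos (δ : ℝ) (hδ0 : 0 < δ) (hδ1 : δ < 1) (f : ℝ → ℝ) (H : ℝ)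
    (hH : ∀ x y, |f x - f y| ≤ H * |x - y| ^ δ) (hH0 : 0 ≤ H)
    (t : ℝ) (ht : 0 < t) (ht1 : t ≤ 1) (u : ℝ) (hu : 0 < u) :
    |∫ r in (0:ℝ)..t, r ^ (-δ) * (f (t - r - u) - f (t - r))|
      ≤ (12 * (H+1) / (1-δ)) * (u * (1 + Real.log (1 + t / u))) := by
  have h1δ : (0:ℝ) < 1 - δ := by linarith
  have hf : Continuous f := holder_continuous ⟨hδ0, hδ1⟩ hH
  have hL : 0 ≤ Real.log (1 + t / u) := Real.log_nonneg (by nlinarith [div_nonneg ht.le hu.le])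
  have hs : 1 ≤ 1/(1-δ) := by rw [le_div_iff₀ h1δ]; linarith
  set L := Real.log (1 + t / u) with hLdef
  rcases le_or_gt t (2*u) with hcase | hcase
  · -- crude case t ≤ 2u
    have hb : ∀ r ∈ Set.uIoc (0:ℝ) t, ‖r ^ (-δ) * (f (t - r - u) - f (t - r))‖ ≤ r ^ (-δ) * (H * u ^ δ) := by
      intro r hr
      rw [Set.uIoc_of_le ht.le] at hr
      have hr0 : 0 < r := hr.1
      rw [norm_mul, norm_rpow_of_nonneg hr0.le, norm_eq_abs, norm_eq_abs, abs_of_nonneg hr0.le]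
      apply mul_le_mul_of_nonneg_left _ (rpow_nonneg hr0.le _)
      calc |f (t - r - u) - f (t - r)| ≤ H * |t - r - u - (t - r)| ^ δ := hH _ _
        _ = H * u ^ δ := by rw [show t - r - u - (t - r) = -u by ring, abs_neg, abs_of_pos hu]
    have hint : IntervalIntegrable (fun r => r ^ (-δ) * (H * u ^ δ)) volume 0 t :=
      intg0 hδ1 continuous_const 0 t
    have key := intervalIntegral.norm_integral_le_abs_of_norm_le (μ := volume)
      (f := fun r => r ^ (-δ) * (f (t - r - u) - f (t - r)))
      ((ae_restrict_mem measurableSet_uIoc).mono hb) hint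
    have hval : (∫ r in (0:ℝ)..t, r ^ (-δ) * (H * u ^ δ)) = t^(1-δ)/(1-δ) * (H * u^δ) := by
      rw [intervalIntegral.integral_mul_const, integral_rpow (Or.inl (by linarith)),
        Real.zero_rpow (by linarith)]
      ring_nf
    rw [hval] at key
    rw [← Real.norm_eq_abs]
    refine le_trans key ?_
    rw [abs_of_nonneg (by positivity)]
    have htb : t^(1-δ) ≤ 2 * u^(1-δ) := by
      calc t^(1-δ) ≤ (2*u)^(1-δ) := rpow_le_rpow ht.le hcase h1δ.le
        _ = 2^(1-δ) * u^(1-δ) := mul_rpow (by norm_num) hu.le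
        _ ≤ 2 * u^(1-δ) := by
            have h2 : (2:ℝ)^(1-δ) ≤ 2^(1:ℝ) := rpow_le_rpow_of_exponent_le one_le_two (by linarith)
            rw [rpow_one] at h2
            exact mul_le_mul_of_nonneg_right h2 (rpow_nonneg hu.le _)
    have huu : u^(1-δ) * u^δ = u := by
      rw [← rpow_add hu, show 1-δ+δ = 1 by ring, rpow_one]
    rw [div_mul_eq_mul_div, div_mul_eq_mul_div, div_le_div_iff_of_pos_right h1δ]
    have h3 : t^(1-δ) * (H * u^δ) ≤ 2 * H * u := by
      calc t^(1-δ) * (H * u^δ) ≤ (2*u^(1-δ)) * (H * u^δ) := by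
            apply mul_le_mul_of_nonneg_right htb (by positivity)
        _ = 2 * H * (u^(1-δ) * u^δ) := by ring
        _ = 2 * H * u := by rw [huu]
    nlinarith [mul_nonneg (mul_nonneg hH0 hu.le) hL, mul_nonneg hu.le hL]
  · -- main case 2u < t
    have hut : u < t := by linarith
    have htu2 : t/2 ≤ t - u := by linarith
    set e : ℝ → ℝ := fun q => f (t - q) - f t with he_def
    have hecont : Continuous e := by fun_prop
    have heb : ∀ q, |e q| ≤ H * |q| ^ δ := by
      intro q
      calc |e q| = |f (t - q) - f t| := rfl
        _ ≤ H * |t - q - t| ^ δ := hH _ _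
        _ = H * |q| ^ δ := by rw [show t - q - t = -q by ring, abs_neg]
    have hKr : (∫ r in (0:ℝ)..t, r ^ (-δ) * (f (t - r - u) - f (t - r)))
        = (∫ r in (0:ℝ)..t, (r ^ (-δ) * e (r+u) - r ^ (-δ) * e r)) := by
      congr 1
      funext r
      simp only [he_def, show t - (r+u) = t - r - u by ring]
      ring
    have hI1 : IntervalIntegrable (fun r => r ^ (-δ) * e (r+u)) volume 0 t :=
      intg0 hδ1 (hecont.comp (continuous_add_right u)) 0 t
    have hI2 : IntervalIntegrable (fun r => r ^ (-δ) * e r) volume 0 t := intg0 hδ1 hecont 0 t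
    rw [hKr, integral_sub hI1 hI2]
    have hA : (∫ r in (0:ℝ)..t, r ^ (-δ) * e (r+u)) = ∫ q in u..(t+u), (q-u) ^ (-δ) * e q := by
      have h := integral_comp_add_right (a := (0:ℝ)) (b := t) (fun q => (q-u) ^ (-δ) * e q) u
      simp only [add_sub_cancel_right, zero_add] at h
      exact h
    rw [hA]
    -- splits
    set A₁ := ∫ q in u..(2*u), (q-u) ^ (-δ) * e q with hA₁
    set A₂ := ∫ q in (2*u)..t, (q-u) ^ (-δ) * e q with hA₂
    set A₃ := ∫ q in t..(t+u), (q-u) ^ (-δ) * e q with hA₃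
    set B₁ := ∫ q in (0:ℝ)..(2*u), q ^ (-δ) * e q with hB₁
    set B₂ := ∫ q in (2*u)..t, q ^ (-δ) * e q with hB₂
    have hAsplit : (∫ q in u..(t+u), (q-u) ^ (-δ) * e q) = A₁ + A₂ + A₃ := by
      have e1 := integral_add_adjacent_intervals (intg hδ1 hecont u u (2*u)) (intg hδ1 hecont u (2*u) t)
      have e2 := integral_add_adjacent_intervals
        (IntervalIntegrable.trans (intg hδ1 hecont u u (2*u)) (intg hδ1 hecont u (2*u) t))
        (intg hδ1 hecont u t (t+u))
      rw [← e2, ← e1]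
    have hBsplit : (∫ q in (0:ℝ)..t, q ^ (-δ) * e q) = B₁ + B₂ := by
      rw [← integral_add_adjacent_intervals (intg0 hδ1 hecont 0 (2*u)) (intg0 hδ1 hecont (2*u) t)]
    rw [hAsplit, hBsplit]
    have hT4 : A₂ - B₂ = ∫ q in (2*u)..t, ((q-u) ^ (-δ) - q ^ (-δ)) * e q := by
      rw [hA₂, hB₂, ← integral_sub (intg hδ1 hecont u (2*u) t) (intg0 hδ1 hecont (2*u) t)]
      congr 1; funext q; ring
    -- bound A₁
    have bA₁ : |A₁| ≤ 2*H*u/(1-δ) := by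
      have hb : ∀ q ∈ Set.uIoc u (2*u), ‖(q-u) ^ (-δ) * e q‖ ≤ (q-u) ^ (-δ) * (H * (2*u) ^ δ) := by
        intro q hq
        rw [Set.uIoc_of_le (by linarith)] at hq
        have hq1 : u < q := hq.1
        have hq2 : q ≤ 2*u := hq.2
        rw [norm_mul, norm_rpow_of_nonneg (by linarith), norm_eq_abs, norm_eq_abs,
          abs_of_nonneg (by linarith : (0:ℝ) ≤ q - u)]
        apply mul_le_mul_of_nonneg_left _ (rpow_nonneg (by linarith) _)
        calc |e q| ≤ H * |q| ^ δ := heb q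
          _ ≤ H * (2*u) ^ δ := by
              apply mul_le_mul_of_nonneg_left _ hH0
              rw [abs_of_pos (by linarith : (0:ℝ) < q)]
              exact rpow_le_rpow (by linarith) hq2 hδ0.le
      have hint : IntervalIntegrable (fun q => (q-u) ^ (-δ) * (H * (2*u) ^ δ)) volume u (2*u) :=
        intg hδ1 continuous_const u u (2*u)
      have key := intervalIntegral.norm_integral_le_abs_of_norm_le (μ := volume)
        (f := fun q => (q-u) ^ (-δ) * e q)
        ((ae_restrict_mem measurableSet_uIoc).mono hb) hint
      have hval : (∫ q in u..(2*u), (q-u) ^ (-δ) * (H * (2*u) ^ δ))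
          = u^(1-δ)/(1-δ) * (H * (2*u)^δ) := by
        rw [intervalIntegral.integral_mul_const, intval hδ1 u u (2*u), sub_self,
          Real.zero_rpow (by linarith), show 2*u-u = u by ring]
        ring
      rw [hval, abs_of_nonneg (by positivity)] at key
      rw [← Real.norm_eq_abs]
      refine le_trans key ?_
      have h2uδ : (2*u)^δ ≤ 2 * u^δ := by
        rw [mul_rpow (by norm_num) hu.le]
        have h2 : (2:ℝ)^δ ≤ 2^(1:ℝ) := rpow_le_rpow_of_exponent_le one_le_two (by linarith)
        rw [rpow_one] at h2
        exact mul_le_mul_of_nonneg_right h2 (rpow_nonneg hu.le _)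
      have huu : u^(1-δ) * u^δ = u := by
        rw [← rpow_add hu, show 1-δ+δ = 1 by ring, rpow_one]
      calc u^(1-δ)/(1-δ) * (H * (2*u)^δ) ≤ u^(1-δ)/(1-δ) * (H * (2*u^δ)) := by
            apply mul_le_mul_of_nonneg_left (mul_le_mul_of_nonneg_left h2uδ hH0) (by positivity)
        _ = 2*H*(u^(1-δ)*u^δ)/(1-δ) := by ring
        _ = 2*H*u/(1-δ) := by rw [huu]
    -- bound B₁
    have bB₁ : |B₁| ≤ 2*H*u := by
      have hb : ∀ q ∈ Set.uIoc (0:ℝ) (2*u), ‖q ^ (-δ) * e q‖ ≤ H := by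
        intro q hq
        rw [Set.uIoc_of_le (by linarith)] at hq
        have hq0 : 0 < q := hq.1
        rw [norm_mul, norm_rpow_of_nonneg hq0.le, norm_eq_abs, norm_eq_abs, abs_of_pos hq0]
        calc q ^ (-δ) * |e q| ≤ q ^ (-δ) * (H * q ^ δ) := by
              apply mul_le_mul_of_nonneg_left _ (rpow_nonneg hq0.le _)
              calc |e q| ≤ H * |q| ^ δ := heb q
                _ = H * q ^ δ := by rw [abs_of_pos hq0]
          _ = H * (q ^ (-δ) * q ^ δ) := by ring
          _ = H := by rw [← rpow_add hq0, neg_add_cancel, rpow_zero, mul_one]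
      have key := intervalIntegral.norm_integral_le_of_norm_le_const hb
      rw [← Real.norm_eq_abs]
      refine le_trans key ?_
      rw [sub_zero, abs_of_pos (by linarith)]
      ring_nf
      nlinarith
    -- bound A₃
    have bA₃ : |A₃| ≤ 4*H*u := by
      have hb : ∀ q ∈ Set.uIoc t (t+u), ‖(q-u) ^ (-δ) * e q‖ ≤ 4*H := by
        intro q hq
        rw [Set.uIoc_of_le (by linarith)] at hq
        have hq1 : t < q := hq.1
        have hq2 : q ≤ t + u := hq.2
        have hqu : 0 < q - u := by linarith
        rw [norm_mul, norm_rpow_of_nonneg (by linarith), norm_eq_abs, norm_eq_abs,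
          abs_of_pos hqu]
        have k1 : (q-u) ^ (-δ) ≤ (t-u) ^ (-δ) :=
          rpow_le_rpow_of_nonpos (by linarith) (by linarith) (by linarith)
        have k2 : |e q| ≤ H * (2*t) ^ δ := by
          calc |e q| ≤ H * |q| ^ δ := heb q
            _ ≤ H * (2*t) ^ δ := by
                apply mul_le_mul_of_nonneg_left _ hH0
                rw [abs_of_pos (by linarith : (0:ℝ) < q)]
                exact rpow_le_rpow (by linarith) (by linarith) hδ0.le
        calc (q-u) ^ (-δ) * |e q| ≤ (t-u) ^ (-δ) * (H * (2*t) ^ δ) := by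
              apply mul_le_mul k1 k2 (abs_nonneg _) (rpow_nonneg (by linarith) _)
          _ = H * ((2*t) ^ δ * ((t-u) ^ δ)⁻¹) := by
              rw [rpow_neg (by linarith : (0:ℝ) ≤ t - u)]; ring
          _ = H * (2*t/(t-u)) ^ δ := by
              rw [div_rpow (by linarith) (by linarith)]; ring
          _ ≤ H * 4 := by
              apply mul_le_mul_of_nonneg_left _ hH0
              calc (2*t/(t-u)) ^ δ ≤ (4:ℝ) ^ δ := by
                    apply rpow_le_rpow (div_nonneg (by linarith) (by linarith)) _ hδ0.le
                    rw [div_le_iff₀ (by linarith)]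
                    linarith
                _ ≤ (4:ℝ) ^ (1:ℝ) := rpow_le_rpow_of_exponent_le (by norm_num) (by linarith)
                _ = 4 := rpow_one 4
          _ = 4*H := by ring
      have key := intervalIntegral.norm_integral_le_of_norm_le_const hb
      rw [← Real.norm_eq_abs]
      refine le_trans key ?_
      rw [show t + u - t = u by ring, abs_of_pos hu]
    -- bound T4
    have bT4 : |A₂ - B₂| ≤ 4*H*u*L := by
      rw [hT4]
      have hb : ∀ q ∈ Set.uIoc (2*u) t, ‖((q-u) ^ (-δ) - q ^ (-δ)) * e q‖ ≤ (4*H*u) * q⁻¹ := by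
        intro q hq
        rw [Set.uIoc_of_le (by linarith)] at hq
        have hq1 : 2*u < q := hq.1
        have hq2 : q ≤ t := hq.2
        have hq0 : 0 < q := by linarith
        have hqu : 0 < q - u := by linarith
        have hdnn : 0 ≤ (q-u) ^ (-δ) - q ^ (-δ) := by
          rw [sub_nonneg]
          exact rpow_le_rpow_of_nonpos hqu (by linarith) (by linarith)
        have d1 : (q-u) ^ (-δ) - q ^ (-δ) ≤ δ * u * (q-u) ^ (-δ-1) := by
          have := rpow_diff_le (q-u) q δ hqu (by linarith) hδ0.le
          calc (q-u) ^ (-δ) - q ^ (-δ) ≤ δ * (q - (q-u)) * (q-u)^(-δ-1) := this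
            _ = δ * u * (q-u) ^ (-δ-1) := by ring_nf
        have d2 : (q-u) ^ (-δ-1) ≤ 2^(δ+1) * q^(-δ-1) := by
          have k1 : (q-u) ^ (-δ-1) ≤ (q/2) ^ (-δ-1) :=
            rpow_le_rpow_of_nonpos (by linarith) (by linarith) (by linarith)
          have k2 : (q/2) ^ (-δ-1) = 2^(δ+1) * q^(-δ-1) := by
            rw [div_rpow hq0.le (by norm_num), show (-δ-1 : ℝ) = -(δ+1) by ring,
              Real.rpow_neg (by norm_num : (0:ℝ) ≤ 2) (δ+1), div_eq_mul_inv, inv_inv]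
            ring
          rw [k2] at k1
          exact k1
        have d3 : |e q| ≤ H * q ^ δ := by
          calc |e q| ≤ H * |q| ^ δ := heb q
            _ = H * q ^ δ := by rw [abs_of_pos hq0]
        have d4 : (2:ℝ)^(δ+1) ≤ 4 := by
          calc (2:ℝ)^(δ+1) ≤ 2^(2:ℝ) := rpow_le_rpow_of_exponent_le one_le_two (by linarith)
            _ = 4 := by
                rw [show (2:ℝ) = ((2:ℕ):ℝ) by norm_num, rpow_natCast]
                norm_num
        have d5 : q^(-δ-1) * q^δ = q⁻¹ := by
          rw [← rpow_add hq0, show -δ-1+δ = -1 by ring, rpow_neg_one]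
        rw [norm_mul, norm_eq_abs, norm_eq_abs, abs_of_nonneg hdnn]
        calc ((q-u) ^ (-δ) - q ^ (-δ)) * |e q| ≤ (δ * u * (q-u) ^ (-δ-1)) * (H * q ^ δ) := by
              apply mul_le_mul d1 d3 (abs_nonneg _)
              positivity
          _ ≤ (δ * u * (2^(δ+1) * q^(-δ-1))) * (H * q ^ δ) := by
              apply mul_le_mul_of_nonneg_right _ (by positivity)
              apply mul_le_mul_of_nonneg_left d2 (by positivity)
          _ = (δ * 2^(δ+1)) * H * u * (q^(-δ-1) * q^δ) := by ring
          _ = (δ * 2^(δ+1)) * H * u * q⁻¹ := by rw [d5]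
          _ ≤ (4*H*u) * q⁻¹ := by
              have h2p : (0:ℝ) < 2^(δ+1) := rpow_pos_of_pos (by norm_num) _
              have k : δ * 2^(δ+1) ≤ 4 := by nlinarith [d4, h2p]
              calc (δ * 2^(δ+1)) * H * u * q⁻¹ = (δ * 2^(δ+1)) * (H*u*q⁻¹) := by ring
                _ ≤ 4 * (H*u*q⁻¹) := mul_le_mul_of_nonneg_right k (by positivity)
                _ = (4*H*u) * q⁻¹ := by ring
      have hint : IntervalIntegrable (fun q => (4*H*u) * q⁻¹) volume (2*u) t := by
        apply ContinuousOn.intervalIntegrable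
        apply ContinuousOn.mul continuousOn_const
        apply ContinuousOn.inv₀ continuousOn_id
        intro x hx
        rw [Set.uIcc_of_le (by linarith)] at hx
        simp only [id_eq]
        exact ne_of_gt (by linarith [hx.1])
      have key := intervalIntegral.norm_integral_le_abs_of_norm_le (μ := volume)
        (f := fun q => ((q-u) ^ (-δ) - q ^ (-δ)) * e q)
        ((ae_restrict_mem measurableSet_uIoc).mono hb) hint
      have hval : (∫ q in (2*u)..t, (4*H*u) * q⁻¹) = (4*H*u) * Real.log (t/(2*u)) := by
        rw [intervalIntegral.integral_const_mul, integral_inv]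
        rw [Set.uIcc_of_le (by linarith)]
        intro hmem
        exact absurd hmem.1 (not_le.mpr (by linarith))
      rw [hval] at key
      rw [← Real.norm_eq_abs]
      refine le_trans key ?_
      have hlog1 : 0 ≤ Real.log (t/(2*u)) := Real.log_nonneg (by rw [le_div_iff₀ (by linarith)]; linarith)
      rw [abs_of_nonneg (by positivity)]
      apply mul_le_mul_of_nonneg_left _ (by positivity)
      apply Real.log_le_log (by positivity)
      rw [div_le_iff₀ (by linarith)]
      have : t/u ≤ 1 + t/u := by linarith
      have htu : t = (t/u) * u := by field_simp
      nlinarith [div_nonneg ht.le hu.le]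
    -- combine
    have hsum : |A₁ + A₂ + A₃ - (B₁ + B₂)| ≤ |A₁| + |B₁| + |A₂ - B₂| + |A₃| := by
      have h1 : A₁ + A₂ + A₃ - (B₁ + B₂) = (A₁ - B₁) + (A₂ - B₂) + A₃ := by ring
      rw [h1]
      calc |(A₁ - B₁) + (A₂ - B₂) + A₃| ≤ |(A₁ - B₁) + (A₂ - B₂)| + |A₃| := abs_add_le _ _
        _ ≤ |A₁ - B₁| + |A₂ - B₂| + |A₃| := by linarith [abs_add_le (A₁ - B₁) (A₂ - B₂)]
        _ ≤ |A₁| + |B₁| + |A₂ - B₂| + |A₃| := by linarith [abs_sub A₁ B₁]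
    refine le_trans hsum ?_
    have has : 2*H*u/(1-δ) = 2*(H*u*(1/(1-δ))) := by ring
    have hHu : 0 ≤ H*u := mul_nonneg hH0 hu.le
    have hHuL : 0 ≤ H*u*L := mul_nonneg hHu hL
    have e1 : H*u ≤ H*u*(1/(1-δ)) := le_mul_of_one_le_right hHu hs
    have e2 : H*u*L ≤ H*u*L*(1/(1-δ)) := le_mul_of_one_le_right hHuL hs
    have e3 : 0 ≤ u*(1/(1-δ)) := by positivity
    have e4 : 0 ≤ u*L*(1/(1-δ)) := by positivity
    have h5 : 0 ≤ H*u*(1/(1-δ)) := by positivity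
    have h6 : 0 ≤ H*u*L*(1/(1-δ)) := mul_nonneg (mul_nonneg hHu hL) (by positivity)
    have hexp : 12*(H+1)/(1-δ)*(u*(1+L)) = 12*(H*u*(1/(1-δ))) + 12*(H*u*L*(1/(1-δ)))
        + 12*(u*(1/(1-δ))) + 12*(u*L*(1/(1-δ))) := by ring
    linarith [bA₁, bB₁, bT4, bA₃, e1, e2, e3, e4, h5, h6, hexp, has]

lemma kernel_all (δ : ℝ) (hδ0 : 0 < δ) (hδ1 : δ < 1) (f : ℝ → ℝ) (H : ℝ)
    (hH : ∀ x y, |f x - f y| ≤ H * |x - y| ^ δ) (hH0 : 0 ≤ H)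
    (t : ℝ) (ht : 0 < t) (ht1 : t ≤ 1) (u : ℝ) :
    |∫ s in (0:ℝ)..t, (t - s) ^ (-δ) * (f (s - u) - f s)|
      ≤ (12 * (H+1) / (1-δ)) * (|u| * (1 + Real.log (1 + t / |u|))) := by
  have hconv : (∫ s in (0:ℝ)..t, (t - s) ^ (-δ) * (f (s - u) - f s))
      = ∫ r in (0:ℝ)..t, r ^ (-δ) * (f (t - r - u) - f (t - r)) := by
    have h := integral_comp_sub_left (a := (0:ℝ)) (b := t)
      (fun r => r ^ (-δ) * (f (t - r - u) - f (t - r))) t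
    simp only [sub_self, sub_zero] at h
    rw [← h]
    congr 1
    funext s
    rw [show t - (t - s) - u = s - u by ring, show t - (t - s) = s by ring]
  rcases lt_trichotomy u 0 with hu | hu | hu
  · have hv : 0 < -u := by linarith
    have hH' : ∀ x y, |f (x - u) - f (y - u)| ≤ H * |x - y| ^ δ := by
      intro x y
      have := hH (x - u) (y - u)
      rwa [show x - u - (y - u) = x - y by ring] at this
    have key := kernel_pos δ hδ0 hδ1 (fun x => f (x - u)) H hH' hH0 t ht ht1 (-u) hv
    have heq : (fun r => r ^ (-δ) * (f (t - r - -u - u) - f (t - r - u)))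
        = fun r => -(r ^ (-δ) * (f (t - r - u) - f (t - r))) := by
      funext r
      rw [show t - r - -u - u = t - r by ring]
      ring
    rw [heq, intervalIntegral.integral_neg, abs_neg] at key
    rw [hconv, abs_of_neg hu]
    exact key
  · subst hu
    simp
  · rw [hconv, abs_of_pos hu]
    exact kernel_pos δ hδ0 hδ1 f H hH hH0 t ht ht1 u hu

end Aux

open intervalIntegral Real in
/-- Pointwise bound from the proof of Lemma 7 of the paper: for `δ ∈ (0,1)`, a bounded
`δ`-Hölder `f` and a compactly supported integrable `g` with vanishing mean,
`|I^{1-δ}(f ∗ g)(t)| ≤ C ∫ |u| (1 + log(1 + t/|u|)) |g(u)| du` for `t ∈ [0,1]`. -/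
theorem fracInt_conv_pointwise_bound
    (δ : ℝ) (hδ : δ ∈ Set.Ioo (0 : ℝ) 1)
    (f : ℝ → ℝ) (Mf : ℝ) (hfb : ∀ x, |f x| ≤ Mf)
    (H : ℝ) (hH : ∀ x y, |f x - f y| ≤ H * |x - y| ^ δ) :
    ∃ C > (0 : ℝ), ∀ g : ℝ → ℝ, Integrable g → HasCompactSupport g →
      (∫ u, g u) = 0 →
      ∀ t ∈ Set.Icc (0 : ℝ) 1,
        |fracInt (1 - δ) (conv f g) t|
          ≤ C * ∫ u, |u| * (1 + Real.log (1 + t / |u|)) * |g u| := by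
  obtain ⟨hδ0, hδ1⟩ := hδ
  have h1δ : (0:ℝ) < 1 - δ := by linarith
  have hH0 : 0 ≤ H := by
    have := hH 0 1
    simp at this
    exact le_trans (abs_nonneg _) this
  have hMf0 : 0 ≤ Mf := le_trans (abs_nonneg _) (hfb 0)
  have hf : Continuous f := holder_continuous ⟨hδ0, hδ1⟩ hH
  refine ⟨12 * (H+1) / (1-δ), by positivity, ?_⟩
  set C := 12 * (H+1) / (1-δ) with hC
  have hCpos : 0 < C := by positivity
  intro g hg hgsupp hgmean t ht
  have hwnn : ∀ u : ℝ, 0 ≤ |u| * (1 + Real.log (1 + t / |u|)) * |g u| := by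
    intro u
    have h1 : 0 ≤ t / |u| := div_nonneg ht.1 (abs_nonneg u)
    have h2 : 0 ≤ Real.log (1 + t / |u|) := Real.log_nonneg (by linarith)
    have := abs_nonneg (g u)
    positivity
  rcases eq_or_lt_of_le ht.1 with h0 | h0
  · rw [fracInt, if_neg (by rw [← h0]; exact lt_irrefl 0), abs_zero]
    exact mul_nonneg hCpos.le (integral_nonneg hwnn)
  · -- t > 0
    rw [fracInt, if_pos h0]
    have hexp : (1 - δ - 1 : ℝ) = -δ := by ring
    rw [hexp]
    -- rewrite conv using mean zero
    have hconv : ∀ s : ℝ, conv f g s = ∫ u, (f (s - u) - f s) * g u := by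
      intro s
      have h1 : Integrable (fun u => f (s - u) * g u) volume := by
        apply hg.bdd_mul (c := Mf)
        · exact (hf.comp (continuous_const.sub continuous_id)).aestronglyMeasurable
        · exact Filter.Eventually.of_forall fun x => by simpa [Real.norm_eq_abs] using hfb (s - x)
      have h2 : Integrable (fun u => f s * g u) volume := hg.const_mul _
      calc conv f g s = (∫ u, f (s - u) * g u) - f s * ∫ u, g u := by
            rw [hgmean, mul_zero, sub_zero]; rfl
        _ = (∫ u, f (s - u) * g u) - ∫ u, f s * g u := by
            rw [MeasureTheory.integral_const_mul]
        _ = ∫ u, (f (s - u) * g u - f s * g u) := (integral_sub h1 h2).symm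
        _ = ∫ u, (f (s - u) - f s) * g u := by congr 1; funext u; ring
    have hrw : (∫ s in (0:ℝ)..t, (t - s) ^ (-δ) * conv f g s)
        = ∫ s in Set.Ioc (0:ℝ) t, ∫ u, (t - s) ^ (-δ) * ((f (s - u) - f s) * g u) := by
      rw [← intervalIntegral.integral_of_le h0.le]
      congr 1
      funext s
      rw [hconv s, ← MeasureTheory.integral_const_mul]
    rw [hrw]
    -- Fubini
    have hker : Integrable (fun s => ‖(t - s) ^ (-δ)‖) (volume.restrict (Set.Ioc 0 t)) := by
      have h1 : IntervalIntegrable (fun s => (t - s) ^ (-δ)) volume 0 t := by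
        have := (intervalIntegrable_rpow' (r := -δ) (by linarith)
          (a := t) (b := 0)).comp_sub_left t
        simpa using this
      exact (intervalIntegrable_iff_integrableOn_Ioc_of_le h0.le).mp h1.norm
    have hgn : Integrable (fun u => 2 * Mf * |g u|) volume := (hg.norm.const_mul _)
    have hD : Integrable (fun p : ℝ × ℝ => ‖(t - p.1) ^ (-δ)‖ * (2 * Mf * |g p.2|))
        ((volume.restrict (Set.Ioc 0 t)).prod volume) := Integrable.mul_prod hker hgn
    have hFm : AEStronglyMeasurable (fun p : ℝ × ℝ => (t - p.1) ^ (-δ) * ((f (p.1 - p.2) - f p.1) * g p.2))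
        ((volume.restrict (Set.Ioc 0 t)).prod volume) := by
      have m1 : Measurable (fun p : ℝ × ℝ => (t - p.1) ^ (-δ) * (f (p.1 - p.2) - f p.1)) := by
        apply Measurable.mul
        · exact ((measurable_const.sub measurable_fst)).pow measurable_const
        · exact ((hf.comp (continuous_fst.sub continuous_snd)).sub
            (hf.comp continuous_fst)).measurable
      have m2 : AEStronglyMeasurable (fun p : ℝ × ℝ => g p.2)
          ((volume.restrict (Set.Ioc 0 t)).prod volume) :=
        hg.1.comp_quasiMeasurePreserving Measure.quasiMeasurePreserving_snd
      exact (m1.aestronglyMeasurable.mul m2).congr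
        (Filter.Eventually.of_forall fun p => by simp [Pi.mul_apply, mul_assoc])
    have hFint : Integrable (fun p : ℝ × ℝ => (t - p.1) ^ (-δ) * ((f (p.1 - p.2) - f p.1) * g p.2))
        ((volume.restrict (Set.Ioc 0 t)).prod volume) := by
      apply Integrable.mono hD hFm
      apply Filter.Eventually.of_forall
      intro p
      rw [Real.norm_eq_abs, Real.norm_eq_abs, abs_mul]
      have hb1 : |(f (p.1 - p.2) - f p.1) * g p.2| ≤ 2 * Mf * |g p.2| := by
        rw [abs_mul]
        apply mul_le_mul_of_nonneg_right _ (abs_nonneg _)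
        calc |f (p.1 - p.2) - f p.1| ≤ |f (p.1 - p.2)| + |f p.1| := abs_sub _ _
          _ ≤ 2 * Mf := by linarith [hfb (p.1 - p.2), hfb p.1]
      calc |(t - p.1) ^ (-δ)| * |(f (p.1 - p.2) - f p.1) * g p.2|
          ≤ |(t - p.1) ^ (-δ)| * (2 * Mf * |g p.2|) :=
            mul_le_mul_of_nonneg_left hb1 (abs_nonneg _)
        _ ≤ |‖(t - p.1) ^ (-δ)‖ * (2 * Mf * |g p.2|)| := by
            rw [Real.norm_eq_abs]; exact le_abs_self _
    have hswap := MeasureTheory.integral_integral_swap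
      (f := fun s u => (t - s) ^ (-δ) * ((f (s - u) - f s) * g u)) hFint
    rw [hswap]
    -- weight function integrability
    obtain ⟨R, hR⟩ := (Metric.isBounded_iff_subset_closedBall 0).mp hgsupp.isBounded
    set R' := max R 0 with hR'
    have hRsub : tsupport g ⊆ Metric.closedBall 0 R' :=
      hR.trans (Metric.closedBall_subset_closedBall (le_max_left _ _))
    set w : ℝ → ℝ := fun u => C * (|u| * (1 + Real.log (1 + t / |u|)) * |g u|) with hw
    have hulog : ∀ u : ℝ, |u| * Real.log (1 + t / |u|) ≤ t := by
      intro u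
      rcases eq_or_ne u 0 with h | h
      · simp [h, h0.le]
      · have hu0 : 0 < |u| := abs_pos.mpr h
        have hl : Real.log (1 + t / |u|) ≤ t / |u| := by
          have := Real.log_le_sub_one_of_pos (show (0:ℝ) < 1 + t / |u| by positivity)
          linarith
        calc |u| * Real.log (1 + t / |u|) ≤ |u| * (t / |u|) :=
              mul_le_mul_of_nonneg_left hl hu0.le
          _ = t := by field_simp
    have hwnn' : ∀ u : ℝ, 0 ≤ w u := fun u => mul_nonneg hCpos.le (hwnn u)
    have hwint : Integrable w volume := by
      apply Integrable.mono (hg.norm.const_mul (C * (R' + 1)))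
      · have m : Measurable (fun u : ℝ => C * (|u| * (1 + Real.log (1 + t / |u|)))) := by
          measurability
        exact (m.aestronglyMeasurable.mul hg.norm.1).congr
          (Filter.Eventually.of_forall fun u => by
            simp only [Pi.mul_apply, Real.norm_eq_abs, hw]; ring)
      · apply Filter.Eventually.of_forall
        intro u
        rw [Real.norm_eq_abs, Real.norm_eq_abs, abs_of_nonneg (hwnn' u)]
        rcases em (u ∈ tsupport g) with hmem | hmem
        · have hub : |u| ≤ R' := by
            have := hRsub hmem
            simpa [Real.dist_eq] using Metric.mem_closedBall.mp this
          have hfac : |u| * (1 + Real.log (1 + t / |u|)) ≤ R' + 1 := by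
            have := hulog u
            have h2 : |u| * (1 + Real.log (1 + t / |u|))
                = |u| + |u| * Real.log (1 + t / |u|) := by ring
            rw [h2]
            linarith [ht.2]
          calc w u = (|u| * (1 + Real.log (1 + t / |u|))) * (C * |g u|) := by
                rw [hw]; ring
            _ ≤ (R' + 1) * (C * |g u|) := by
                apply mul_le_mul_of_nonneg_right hfac (by positivity)
            _ = C * (R' + 1) * |g u| := by ring
            _ ≤ |C * (R' + 1) * ‖g u‖| := by rw [Real.norm_eq_abs]; exact le_abs_self _
        · have : g u = 0 := image_eq_zero_of_notMem_tsupport hmem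
          rw [hw]
          simp only [this, abs_zero, mul_zero, zero_mul]
          exact abs_nonneg _
    -- pointwise bound and conclude
    have hb : ∀ u : ℝ, ‖∫ s in Set.Ioc (0:ℝ) t, (t - s) ^ (-δ) * ((f (s - u) - f s) * g u)‖
        ≤ w u := by
      intro u
      have heq : (∫ s in Set.Ioc (0:ℝ) t, (t - s) ^ (-δ) * ((f (s - u) - f s) * g u))
          = (∫ s in (0:ℝ)..t, (t - s) ^ (-δ) * (f (s - u) - f s)) * g u := by
        rw [intervalIntegral.integral_of_le h0.le, ← MeasureTheory.integral_mul_const]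
        congr 1
        funext s
        ring
      rw [heq, Real.norm_eq_abs, abs_mul]
      have hker2 := kernel_all δ hδ0 hδ1 f H hH hH0 t h0 ht.2 u
      calc |∫ s in (0:ℝ)..t, (t - s) ^ (-δ) * (f (s - u) - f s)| * |g u|
          ≤ (C * (|u| * (1 + Real.log (1 + t / |u|)))) * |g u| :=
            mul_le_mul_of_nonneg_right hker2 (abs_nonneg _)
        _ = w u := by rw [hw]; ring
    have key := MeasureTheory.norm_integral_le_of_norm_le hwint (Filter.Eventually.of_forall hb)
    rw [Real.norm_eq_abs] at key
    refine le_trans key ?_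
    have hfin : (∫ u, w u) = C * ∫ u, |u| * (1 + Real.log (1 + t / |u|)) * |g u| := by
      rw [hw, MeasureTheory.integral_const_mul]
    rw [hfin]
end
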